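/- arXiv:2003.04201 — 2 statements merged into one kernel-verified Lean document; each statement's English description precedes it below -/
import Mathlib

section
/- Let g : ℝ^d → ℝ ∪ {+∞} be proper, convex, lower semicontinuous and let f : ℝ^d → ℝ be a convex differentiable function whose gradient ∇f is L-Lipschitz. Fix x ∈ ℝ^d and a stepsize α with 0 < α ≤ 1/L, and set x⁺ = prox_{αg}(x − α∇f(x)). Then for every z ∈ ℝ^d: (g+f)(x⁺) + (1/(2α))‖x⁺ − z‖² ≤ (g+f)(z) + (1/(2α))‖x − z‖². -/
open scoped InnerProductSpace

/-- Convexity for an extended-real-valued function. -/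
def ERealConvex {d : ℕ} (g : EuclideanSpace ℝ (Fin d) → EReal) : Prop :=
  ∀ x y : EuclideanSpace ℝ (Fin d), ∀ a b : ℝ, 0 ≤ a → 0 ≤ b → a + b = 1 →
    g (a • x + b • y) ≤ (a : EReal) * g x + (b : EReal) * g y

/-- `g` is proper: it never takes the value `⊥` and is not identically `⊤`. -/
def ERealProper {d : ℕ} (g : EuclideanSpace ℝ (Fin d) → EReal) : Prop :=
  (∀ x, g x ≠ ⊥) ∧ (∃ x, g x ≠ ⊤)

/-- `p = prox_{αg}(y)`, i.e. `p` minimizes `z ↦ g z + (1/(2α))‖z - y‖²`. -/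
def IsProx {d : ℕ} (g : EuclideanSpace ℝ (Fin d) → EReal) (α : ℝ)
    (y p : EuclideanSpace ℝ (Fin d)) : Prop :=
  ∀ z, g p + ((1 / (2 * α) * ‖p - y‖ ^ 2 : ℝ) : EReal)
      ≤ g z + ((1 / (2 * α) * ‖z - y‖ ^ 2 : ℝ) : EReal)

section Auxs
variable {E : Type*} [NormedAddCommGroup E] [InnerProductSpace ℝ E] [CompleteSpace E]

lemma line_hasDerivAt (f : E → ℝ) (f' : E → E)
    (hf : ∀ y, HasGradientAt f (f' y) y) (x v : E) (t : ℝ) :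
    HasDerivAt (fun s : ℝ => f (x + s • v)) ⟪f' (x + t • v), v⟫_ℝ t := by
  have h1 : HasDerivAt (fun s : ℝ => x + s • v) v t := by
    simpa using ((hasDerivAt_id t).smul_const v).const_add x
  have h2 : HasFDerivAt f (InnerProductSpace.toDual ℝ E (f' (x + t • v))) (x + t • v) :=
    (hasGradientAt_iff_hasFDerivAt.mp (hf (x + t • v)))
  have h3 := h2.comp_hasDerivAt t h1
  simp at h3
  exact h3

lemma grad_convex_ineq (f : E → ℝ) (f' : E → E)
    (hf_convex : ConvexOn ℝ Set.univ f)
    (hf : ∀ y, HasGradientAt f (f' y) y) (x z : E) :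
    f x + ⟪f' x, z - x⟫_ℝ ≤ f z := by
  have hφ : ConvexOn ℝ Set.univ (fun t : ℝ => f (x + t • (z - x))) := by
    have := hf_convex.comp_affineMap (AffineMap.lineMap x z : ℝ →ᵃ[ℝ] E)
    simp only [Function.comp_def, AffineMap.lineMap_apply_module, Set.preimage_univ] at this
    have heq : (fun t : ℝ => f (x + t • (z - x))) = fun t : ℝ => f ((1 - t) • x + t • z) := by
      funext t; congr 1; module
    rw [heq]; exact this
  have hd : HasDerivAt (fun t : ℝ => f (x + t • (z - x))) ⟪f' x, z - x⟫_ℝ 0 := by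
    simpa using line_hasDerivAt f f' hf x (z - x) 0
  have key := hφ.le_slope_of_hasDerivAt (Set.mem_univ 0) (Set.mem_univ 1) zero_lt_one hd
  simp [slope_def_field] at key
  linarith [key]

lemma small_t (a b c : ℝ) (hc : 0 ≤ c) (h : ∀ t : ℝ, t ∈ Set.Ioc (0:ℝ) 1 → a ≤ b + t * c) :
    a ≤ b := by
  apply le_of_forall_pos_le_add
  intro ε hε
  have hc1 : 0 < c + 1 := by linarith
  set t := min 1 (ε / (c + 1)) with ht
  have ht0 : 0 < t := lt_min one_pos (by positivity)
  have ht1 : t ≤ 1 := min_le_left _ _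
  have h2 := h t ⟨ht0, ht1⟩
  have h3 : t ≤ ε / (c + 1) := min_le_right _ _
  have h4 : t * c ≤ ε := by
    have : t * (c + 1) ≤ ε := by
      calc t * (c + 1) ≤ ε / (c + 1) * (c + 1) := by nlinarith
      _ = ε := by field_simp
    nlinarith
  linarith

lemma descent_lemma {L : ℝ} (f : E → ℝ) (f' : E → E)
    (hf : ∀ y, HasGradientAt f (f' y) y)
    (hf_lip : ∀ x y, ‖f' x - f' y‖ ≤ L * ‖x - y‖) (x y : E) :
    f y ≤ f x + ⟪f' x, y - x⟫_ℝ + L / 2 * ‖y - x‖ ^ 2 := by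
  set v := y - x with hv
  set φ : ℝ → ℝ := fun t => L / 2 * ‖v‖ ^ 2 * t ^ 2 + t * ⟪f' x, v⟫_ℝ + f x - f (x + t • v)
    with hφ
  have hφd : ∀ t : ℝ, HasDerivAt φ
      (L * ‖v‖ ^ 2 * t + ⟪f' x, v⟫_ℝ - ⟪f' (x + t • v), v⟫_ℝ) t := by
    intro t
    have h1 := line_hasDerivAt f f' hf x v t
    have h2 : HasDerivAt (fun t : ℝ => L / 2 * ‖v‖ ^ 2 * t ^ 2 + t * ⟪f' x, v⟫_ℝ + f x)
        (L * ‖v‖ ^ 2 * t + ⟪f' x, v⟫_ℝ) t := by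
      have := (((hasDerivAt_pow 2 t).const_mul (L / 2 * ‖v‖ ^ 2)).add
        ((hasDerivAt_id t).mul_const ⟪f' x, v⟫_ℝ)).add_const (f x)
      rw [show L * ‖v‖ ^ 2 * t + ⟪f' x, v⟫_ℝ = L / 2 * ‖v‖ ^ 2 * (((2:ℕ):ℝ) * t ^ (2 - 1)) + 1 * ⟪f' x, v⟫_ℝ by
        norm_num; ring]
      exact this
    exact h2.sub h1
  have mono : MonotoneOn φ (Set.Icc 0 1) := by
    apply monotoneOn_of_deriv_nonneg (convex_Icc 0 1)
    · exact (Continuous.continuousOn (by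
        exact continuous_iff_continuousAt.mpr fun t => (hφd t).differentiableAt.continuousAt))
    · intro t _
      exact (hφd t).differentiableAt.differentiableWithinAt
    · intro t ht
      rw [interior_Icc] at ht
      rw [(hφd t).deriv]
      have hip : ⟪f' (x + t • v), v⟫_ℝ - ⟪f' x, v⟫_ℝ ≤ L * t * ‖v‖ ^ 2 := by
        have h1 : ⟪f' (x + t • v) - f' x, v⟫_ℝ ≤ ‖f' (x + t • v) - f' x‖ * ‖v‖ :=
          real_inner_le_norm _ _
        have h2 : ‖f' (x + t • v) - f' x‖ ≤ L * (t * ‖v‖) := by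
          have := hf_lip (x + t • v) x
          simpa [norm_smul, abs_of_pos ht.1, mul_assoc] using this
        have h3 : ⟪f' (x + t • v) - f' x, v⟫_ℝ = ⟪f' (x + t • v), v⟫_ℝ - ⟪f' x, v⟫_ℝ :=
          inner_sub_left _ _ _
        nlinarith [norm_nonneg v, norm_nonneg (f' (x + t • v) - f' x)]
      linarith
  have h01 := mono (Set.left_mem_Icc.mpr zero_le_one) (Set.right_mem_Icc.mpr zero_le_one)
    zero_le_one
  have hx0 : φ 0 = 0 := by simp [hφ]
  have hx1 : φ 1 = L / 2 * ‖v‖ ^ 2 + ⟪f' x, v⟫_ℝ + f x - f y := by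
    simp [hφ, hv]
  rw [hx0, hx1] at h01
  linarith

end Auxs

/-- Decrease lemma for the proximal-gradient step `x⁺ = prox_{αg}(x - α∇f(x))` with
`0 < α ≤ 1/L`:  `(g+f)(x⁺) + (1/(2α))‖x⁺ - z‖² ≤ (g+f)(z) + (1/(2α))‖x - z‖²`. -/
theorem proxGrad_decrease {d : ℕ} {L : ℝ}
    (g : EuclideanSpace ℝ (Fin d) → EReal)
    (hg_proper : ERealProper g) (hg_convex : ERealConvex g)
    (hg_lsc : LowerSemicontinuous g)
    (f : EuclideanSpace ℝ (Fin d) → ℝ)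
    (f' : EuclideanSpace ℝ (Fin d) → EuclideanSpace ℝ (Fin d))
    (hf_convex : ConvexOn ℝ Set.univ f)
    (hf_diff : ∀ y, HasGradientAt f (f' y) y)
    (hf_lip : ∀ x y, ‖f' x - f' y‖ ≤ L * ‖x - y‖)
    (x : EuclideanSpace ℝ (Fin d)) (α : ℝ) (hα : 0 < α) (hαL : α ≤ 1 / L)
    (xp : EuclideanSpace ℝ (Fin d))
    (hxp : IsProx g α (x - α • f' x) xp) :
    ∀ z : EuclideanSpace ℝ (Fin d),
      g xp + ((f xp + 1 / (2 * α) * ‖xp - z‖ ^ 2 : ℝ) : EReal)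
        ≤ g z + ((f z + 1 / (2 * α) * ‖x - z‖ ^ 2 : ℝ) : EReal) := by
  intro z
  obtain ⟨hbot, z0, hz0⟩ := hg_proper
  set y : EuclideanSpace ℝ (Fin d) := x - α • f' x with hy
  -- L > 0
  have hL : 0 < L := by
    by_contra h
    push_neg at h
    have h1 : 1 / L ≤ 0 := by
      rcases h.lt_or_eq with h' | h'
      · exact le_of_lt (div_neg_of_pos_of_neg one_pos h')
      · rw [h']; norm_num
    linarith
  have hLα : L ≤ 1 / α := by
    rw [le_div_iff₀ hα]
    have := (le_div_iff₀ hL).mp hαL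
    linarith [this]
  -- g xp is finite
  have hgz0 : g z0 = ((g z0).toReal : EReal) := (EReal.coe_toReal hz0 (hbot z0)).symm
  have hxpTop : g xp ≠ ⊤ := by
    intro hT
    have h := hxp z0
    rw [hT, hgz0, ← EReal.coe_add, EReal.top_add_coe] at h
    exact (EReal.coe_ne_top _) (top_le_iff.mp h)
  have hG : g xp = ((g xp).toReal : EReal) := (EReal.coe_toReal hxpTop (hbot xp)).symm
  set G : ℝ := (g xp).toReal with hGdef
  -- prox variational inequality, real form
  have proxVI : ∀ (z' : EuclideanSpace ℝ (Fin d)) (Gz : ℝ), g z' = (Gz : EReal) →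
      2 * α * G ≤ 2 * α * Gz + 2 * ⟪xp - y, z' - xp⟫_ℝ := by
    intro z' Gz hGz
    have hN : (0:ℝ) ≤ ‖z' - xp‖ ^ 2 := sq_nonneg _
    apply small_t _ _ (‖z' - xp‖ ^ 2) hN
    intro t ht
    have hconv := hg_convex xp z' (1 - t) t (by linarith [ht.2]) (le_of_lt ht.1) (by ring)
    rw [hG, hGz] at hconv
    have hconv' : g ((1 - t) • xp + t • z') ≤ (((1 - t) * G + t * Gz : ℝ) : EReal) := by
      rw [EReal.coe_add, EReal.coe_mul, EReal.coe_mul] at *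
      exact hconv
    have hprox := hxp ((1 - t) • xp + t • z')
    rw [hG] at hprox
    have hchain : ((G : ℝ) : EReal) + ((1 / (2 * α) * ‖xp - y‖ ^ 2 : ℝ) : EReal)
        ≤ (((1 - t) * G + t * Gz : ℝ) : EReal)
          + ((1 / (2 * α) * ‖(1 - t) • xp + t • z' - y‖ ^ 2 : ℝ) : EReal) :=
      le_trans hprox (add_le_add hconv' le_rfl)
    rw [← EReal.coe_add, ← EReal.coe_add, EReal.coe_le_coe_iff] at hchain
    -- expand the norm
    have hzt : (1 - t) • xp + t • z' - y = (xp - y) + t • (z' - xp) := by module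
    rw [hzt] at hchain
    have hns : ‖(xp - y) + t • (z' - xp)‖ ^ 2
        = ‖xp - y‖ ^ 2 + 2 * (t * ⟪xp - y, z' - xp⟫_ℝ) + t ^ 2 * ‖z' - xp‖ ^ 2 := by
      rw [norm_add_sq_real, real_inner_smul_right, norm_smul]
      rw [mul_pow, Real.norm_eq_abs, sq_abs]
    rw [hns] at hchain
    -- multiply by 2α
    have h2α : (0:ℝ) < 2 * α := by linarith
    have hchain2 := mul_le_mul_of_nonneg_left hchain (le_of_lt h2α)
    have hcan : ∀ X : ℝ, 2 * α * (1 / (2 * α) * X) = X := by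
      intro X; field_simp
    have hchain3 : 2 * α * G + ‖xp - y‖ ^ 2
        ≤ 2 * α * ((1 - t) * G + t * Gz)
          + (‖xp - y‖ ^ 2 + 2 * (t * ⟪xp - y, z' - xp⟫_ℝ) + t ^ 2 * ‖z' - xp‖ ^ 2) := by
      calc 2 * α * G + ‖xp - y‖ ^ 2 = 2 * α * (G + 1 / (2 * α) * ‖xp - y‖ ^ 2) := by
            rw [mul_add, hcan]
        _ ≤ 2 * α * ((1 - t) * G + t * Gz
              + 1 / (2 * α) * (‖xp - y‖ ^ 2 + 2 * (t * ⟪xp - y, z' - xp⟫_ℝ)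
                + t ^ 2 * ‖z' - xp‖ ^ 2)) := hchain2
        _ = _ := by rw [mul_add, hcan]
    -- divide by t
    have hmul : t * (2 * α * G) ≤ t * (2 * α * Gz + 2 * ⟪xp - y, z' - xp⟫_ℝ
        + t * ‖z' - xp‖ ^ 2) := by nlinarith [hchain3]
    exact le_of_mul_le_mul_left hmul ht.1
  -- now the main goal
  by_cases hzT : g z = ⊤
  · rw [hzT]
    rw [EReal.top_add_coe]
    exact le_top
  have hGz : g z = ((g z).toReal : EReal) := (EReal.coe_toReal hzT (hbot z)).symm
  set Gz : ℝ := (g z).toReal with hGzdef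
  rw [hG, hGz, ← EReal.coe_add, ← EReal.coe_add, EReal.coe_le_coe_iff]
  -- real-valued facts
  have hVI := proxVI z Gz hGz
  have hdes := descent_lemma f f' hf_diff hf_lip x xp
  have hcvx := grad_convex_ineq f f' hf_convex hf_diff x z
  -- inner product identities
  have hI1 : ⟪xp - y, z - xp⟫_ℝ = ⟪xp - x, z - xp⟫_ℝ + α * ⟪f' x, z - xp⟫_ℝ := by
    have hxy : xp - y = (xp - x) + α • f' x := by rw [hy]; module
    rw [hxy, inner_add_left, real_inner_smul_left]
  have hI2 : ⟪f' x, z - x⟫_ℝ - ⟪f' x, z - xp⟫_ℝ = ⟪f' x, xp - x⟫_ℝ := by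
    rw [← inner_sub_right]
    congr 1
    module
  have hI3 : ‖x - z‖ ^ 2 = ‖xp - x‖ ^ 2 + 2 * ⟪xp - x, z - xp⟫_ℝ + ‖xp - z‖ ^ 2 := by
    have hsplit : x - z = (x - xp) + (xp - z) := by module
    rw [hsplit, norm_add_sq_real]
    have : ⟪x - xp, xp - z⟫_ℝ = ⟪xp - x, z - xp⟫_ℝ := by
      rw [show x - xp = -(xp - x) by module, show xp - z = -(z - xp) by module,
        inner_neg_neg]
    rw [this]
    have h1 : ‖x - xp‖ = ‖xp - x‖ := norm_sub_rev _ _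
    rw [h1]
  -- step bound
  have hstep : L / 2 * ‖xp - x‖ ^ 2 ≤ 1 / (2 * α) * ‖xp - x‖ ^ 2 := by
    have h1 : 1 / (2 * α) = (1 / α) / 2 := by
      field_simp
    rw [h1]
    nlinarith [sq_nonneg ‖xp - x‖, hLα]
  -- final combination
  have hVI' : G ≤ Gz + 1 / α * (⟪xp - x, z - xp⟫_ℝ + α * ⟪f' x, z - xp⟫_ℝ) := by
    rw [← hI1]
    have hexp : (2 * α) * (Gz + 1 / α * ⟪xp - y, z - xp⟫_ℝ)
        = 2 * α * Gz + 2 * ⟪xp - y, z - xp⟫_ℝ := by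
      field_simp
    have h2α : (0:ℝ) < 2 * α := by linarith
    have : (2 * α) * G ≤ (2 * α) * (Gz + 1 / α * ⟪xp - y, z - xp⟫_ℝ) := by
      rw [hexp]; exact hVI
    exact le_of_mul_le_mul_left this h2α
  have hsplit1 : 1 / α * (⟪xp - x, z - xp⟫_ℝ + α * ⟪f' x, z - xp⟫_ℝ)
      = 1 / α * ⟪xp - x, z - xp⟫_ℝ + ⟪f' x, z - xp⟫_ℝ := by
    field_simp
  have hsplit2 : 1 / (2 * α) * ‖x - z‖ ^ 2
      = 1 / (2 * α) * ‖xp - x‖ ^ 2 + 1 / α * ⟪xp - x, z - xp⟫_ℝ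
        + 1 / (2 * α) * ‖xp - z‖ ^ 2 := by
    rw [hI3]
    field_simp
  rw [hsplit1] at hVI'
  -- hdes : f xp ≤ f x + ⟪f' x, xp - x⟫ + L/2 ‖xp - x‖²
  -- hcvx : f x + ⟪f' x, z - x⟫ ≤ f z
  -- hI2  : ⟪f' x, z-x⟫ - ⟪f' x, z-xp⟫ = ⟪f' x, xp-x⟫
  linarith [hdes, hcvx, hVI', hstep]
end

section
/- Let g : ℝ^d → ℝ ∪ {+∞} be a proper, convex, lower semicontinuous function and let (α_k)_{k∈ℕ} be any sequence of positive real numbers. Then for any x₀ ∈ ℝ^d, the proximal-point sequence defined by x_{k+1} = prox_{α_k g}(x_k) for all k ≥ 0 is self-contracted. -/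
/-- A sequence `x : ℕ → ℝ^d` is self-contracted if for all `k₁ ≤ k₂ ≤ k₃`,
`‖x k₃ - x k₂‖ ≤ ‖x k₃ - x k₁‖`. -/
def SelfContracted {d : ℕ} (x : ℕ → EuclideanSpace ℝ (Fin d)) : Prop :=
  ∀ k₁ k₂ k₃ : ℕ, k₁ ≤ k₂ → k₂ ≤ k₃ → ‖x k₃ - x k₂‖ ≤ ‖x k₃ - x k₁‖

open scoped RealInnerProductSpace

lemma le_zero_of_forall_le_linear (A C : ℝ) (hC0 : 0 ≤ C)
    (key : ∀ t : ℝ, 0 < t → t ≤ 1 → A ≤ C * t) : A ≤ 0 := by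
  by_contra h
  push_neg at h
  have ht0 : 0 < min 1 (A / (2 * (C + 1))) := lt_min one_pos (by positivity)
  have h1 := key _ ht0 (min_le_left _ _)
  have h5 : C * min 1 (A / (2 * (C + 1))) ≤ (C + 1) * (A / (2 * (C + 1))) :=
    mul_le_mul (by linarith) (min_le_right _ _) ht0.le (by linarith)
  have h6 : (C + 1) * (A / (2 * (C + 1))) = A / 2 := by
    field_simp
  linarith

/-- Subgradient inequality at a proximal point. -/
lemma prox_subgrad {d : ℕ} (g : EuclideanSpace ℝ (Fin d) → EReal)
    (hconv : ERealConvex g) (α : ℝ) (hα : 0 < α)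
    (y p z : EuclideanSpace ℝ (Fin d)) (hp : IsProx g α y p)
    (rp rz : ℝ) (hgp : g p = rp) (hgz : g z = rz) :
    ⟪y - p, z - p⟫ ≤ α * (rz - rp) := by
  set c : ℝ := 1 / (2 * α) with hc
  have hcpos : 0 < c := by positivity
  have key : ∀ t : ℝ, 0 < t → t ≤ 1 →
      rp - rz - 2 * c * ⟪p - y, z - p⟫ ≤ c * ‖z - p‖ ^ 2 * t := by
    intro t ht ht1
    set zt := (1 - t) • p + t • z with hzt
    have hconvt := hconv p z (1 - t) t (by linarith) ht.le (by ring)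
    rw [hgp, hgz] at hconvt
    have hconvt' : g zt ≤ (((1 - t) * rp + t * rz : ℝ) : EReal) := by
      rw [EReal.coe_add, EReal.coe_mul, EReal.coe_mul]; exact hconvt
    have hprox := hp zt
    rw [hgp] at hprox
    have h2 : ((rp + c * ‖p - y‖ ^ 2 : ℝ) : EReal)
        ≤ (((1 - t) * rp + t * rz + c * ‖zt - y‖ ^ 2 : ℝ) : EReal) := by
      rw [EReal.coe_add, EReal.coe_add]
      exact le_trans hprox (add_le_add_left hconvt' _)
    have h3 : rp + c * ‖p - y‖ ^ 2 ≤ (1 - t) * rp + t * rz + c * ‖zt - y‖ ^ 2 :=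
      EReal.coe_le_coe_iff.1 h2
    have hzty : zt - y = (p - y) + t • (z - p) := by
      rw [hzt]; module
    have hnorm : ‖zt - y‖ ^ 2
        = ‖p - y‖ ^ 2 + 2 * (t * ⟪p - y, z - p⟫) + t ^ 2 * ‖z - p‖ ^ 2 := by
      rw [hzty, norm_add_sq_real, real_inner_smul_right, norm_smul, mul_pow]
      simp [abs_of_pos ht]
    rw [hnorm] at h3
    have h4 : t * (rp - rz - 2 * c * ⟪p - y, z - p⟫) ≤ t * (c * ‖z - p‖ ^ 2 * t) := by
      nlinarith [sq_nonneg t]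
    exact le_of_mul_le_mul_left (by linarith [h4]) ht
  have hA : rp - rz - 2 * c * ⟪p - y, z - p⟫ ≤ 0 :=
    le_zero_of_forall_le_linear _ _ (by positivity) key
  have h2c : 2 * c = 1 / α := by rw [hc]; field_simp
  have hinner : ⟪y - p, z - p⟫ = -⟪p - y, z - p⟫ := by
    rw [← inner_neg_left]; simp
  rw [hinner]
  rw [h2c] at hA
  rw [div_mul_eq_mul_div, one_mul] at hA
  have h7 : (rp - rz) * α ≤ ⟪p - y, z - p⟫ := (le_div_iff₀ hα).1 (by linarith)
  nlinarith

/-- The proximal-point algorithm `x_{k+1} = prox_{α_k g}(x_k)` for a proper convex lsc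
function `g` generates a self-contracted sequence, for any positive stepsizes. -/
theorem proximalPoint_selfContracted {d : ℕ}
    (g : EuclideanSpace ℝ (Fin d) → EReal)
    (hg_proper : ERealProper g) (hg_convex : ERealConvex g)
    (hg_lsc : LowerSemicontinuous g)
    (α : ℕ → ℝ) (hα : ∀ k, 0 < α k)
    (x₀ : EuclideanSpace ℝ (Fin d))
    (x : ℕ → EuclideanSpace ℝ (Fin d)) (hx0 : x 0 = x₀)
    (hx : ∀ k, IsProx g (α k) (x k) (x (k + 1))) :
    SelfContracted x := by
  obtain ⟨hbot, z₀, hz₀⟩ := hg_proper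
  -- g (x (k+1)) is a real number for all k
  have hfin : ∀ k : ℕ, ∃ r : ℝ, g (x (k + 1)) = (r : EReal) := by
    intro k
    refine ⟨(g (x (k + 1))).toReal, (EReal.coe_toReal ?_ (hbot _)).symm⟩
    intro htop
    have h1 := hx k z₀
    rw [htop] at h1
    have hz₀' : g z₀ + ((1 / (2 * α k) * ‖z₀ - x k‖ ^ 2 : ℝ) : EReal) < ⊤ := by
      exact EReal.add_lt_top hz₀ (EReal.coe_ne_top _)
    have : (⊤ : EReal) + ((1 / (2 * α k) * ‖x (k + 1) - x k‖ ^ 2 : ℝ) : EReal) = ⊤ := by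
      rw [EReal.top_add_of_ne_bot]; exact EReal.coe_ne_bot _
    rw [this] at h1
    exact absurd (top_le_iff.1 h1) (ne_of_lt hz₀')
  choose r hr using hfin
  -- monotonicity: g decreases along iterates
  have hdec : ∀ k, r (k + 1) ≤ r k := by
    intro k
    have h1 := hx (k + 1) (x (k + 1))
    rw [hr (k + 1), hr k] at h1
    rw [sub_self, norm_zero] at h1
    have h2 : ((r (k + 1) + 1 / (2 * α (k + 1)) * ‖x (k + 2) - x (k + 1)‖ ^ 2 : ℝ) : EReal)
        ≤ ((r k + 1 / (2 * α (k + 1)) * ((0:ℝ) ^ 2) : ℝ) : EReal) := by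
      rw [EReal.coe_add, EReal.coe_add]; exact_mod_cast h1
    have h3 := EReal.coe_le_coe_iff.1 h2
    have hc : 0 ≤ 1 / (2 * α (k + 1)) * ‖x (k + 2) - x (k + 1)‖ ^ 2 := by
      have := (hα (k + 1)); positivity
    simp only [ne_eq, OfNat.ofNat_ne_zero, not_false_eq_true, zero_pow, mul_zero] at h3
    linarith
  have hmono : ∀ k m, k ≤ m → r m ≤ r k := by
    intro k m hkm
    induction m with
    | zero => simp [Nat.le_zero.1 hkm]
    | succ n ih =>
      rcases Nat.lt_or_ge k (n + 1) with h | h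
      · exact le_trans (hdec n) (ih (by omega))
      · have : k = n + 1 := by omega
        rw [this]
  -- key one-step inequality
  have hstep : ∀ k m, k + 1 ≤ m → ‖x m - x (k + 1)‖ ≤ ‖x m - x k‖ := by
    intro k m hkm
    obtain ⟨j, rfl⟩ : ∃ j, m = j + 1 := ⟨m - 1, by omega⟩
    have hsg := prox_subgrad g hg_convex (α k) (hα k) (x k) (x (k + 1)) (x (j + 1))
      (hx k) (r k) (r j) (hr k) (hr j)
    have hrle : r j ≤ r k := hmono k j (by omega)
    have hip : ⟪x k - x (k + 1), x (j + 1) - x (k + 1)⟫ ≤ 0 := by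
      have : α k * (r j - r k) ≤ 0 := mul_nonpos_of_nonneg_of_nonpos (hα k).le (by linarith)
      linarith
    have hsq : ‖x (j + 1) - x (k + 1)‖ ^ 2 ≤ ‖x (j + 1) - x k‖ ^ 2 := by
      have hdecomp : x (j + 1) - x k = (x (j + 1) - x (k + 1)) + (x (k + 1) - x k) := by
        abel
      rw [hdecomp, norm_add_sq_real]
      have hinner2 : ⟪x (j + 1) - x (k + 1), x (k + 1) - x k⟫
          = -⟪x k - x (k + 1), x (j + 1) - x (k + 1)⟫ := by
        rw [real_inner_comm, ← inner_neg_left]; congr 1; abel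
      nlinarith [sq_nonneg ‖x (k + 1) - x k‖, hip, hinner2]
    exact (pow_le_pow_iff_left₀ (norm_nonneg _) (norm_nonneg _) two_ne_zero).1 hsq
  -- conclude
  intro k₁ k₂ k₃ h12 h23
  induction k₂ with
  | zero =>
    have : k₁ = 0 := by omega
    rw [this]
  | succ n ih =>
    rcases Nat.lt_or_ge k₁ (n + 1) with h | h
    · exact le_trans (hstep n k₃ h23) (ih (by omega) (by omega))
    · have : k₁ = n + 1 := by omega
      rw [this]
end
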